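/- Let c > 0 and let R̄ ⊂ C be a finite generic set of requests containing the origin. Then the service time satisfies M_{C,ver}(R̄) − 1 − 1/c ≤ ST(R̄) ≤ M_{C,ver}(R̄) + 1 + 2/c, where M_{C,ver}(R̄) is the length of the longest chain in R̄ with respect to ≤_ver. -/

import Mathlib

/-- Horizontal order on the strip `U` (points of `ℝ²`, `(t,r)` coordinates):
`(t₁,r₁) ≤_hor (t₂,r₂)` iff `t₁ ≤ t₂` and `c(t₂−t₁) ≥ |r₂−r₁|`. -/
def horRel (c : ℝ) (P Q : ℝ × ℝ) : Prop :=
  P.1 ≤ Q.1 ∧ |Q.2 - P.2| ≤ c * (Q.1 - P.1)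

/-- Vertical order on the strip: `r₂ − r₁ ≥ c|t₂ − t₁|`. -/
def verRel (c : ℝ) (P Q : ℝ × ℝ) : Prop := c * |Q.1 - P.1| ≤ Q.2 - P.2

/-- The projection `π : U → C`, with the cylinder `C` realized as the
fundamental domain `[0,1) × [0,1]`. -/
noncomputable def piC (P : ℝ × ℝ) : ℝ × ℝ := (Int.fract P.1, P.2)

/-- The vertical order induced on the cylinder: comparability of some lifts. -/
def verRelC (c : ℝ) (R₁ R₂ : ℝ × ℝ) : Prop :=
  ∃ Q₁ Q₂ : ℝ × ℝ, piC Q₁ = piC R₁ ∧ piC Q₂ = piC R₂ ∧ verRel c Q₁ Q₂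

/-- A tour of the request set `R` servicing all requests within `k` disk
rotations: a `≤_hor`-chain in `π⁻¹(R)` starting at `(0,0)`, meeting each fiber
exactly once, that can return to `(k,0)` (disk location `(0,0)` after `k`
rotations). -/
def IsTour (c : ℝ) (R : Finset (ℝ × ℝ)) (k : ℕ) : Prop :=
  ∃ n : ℕ, n + 1 = R.card ∧
    ∃ Q : Fin (n + 1) → ℝ × ℝ,
      Q 0 = (0, 0) ∧
      (∀ i, piC (Q i) ∈ R) ∧
      Function.Injective (fun i => piC (Q i)) ∧
      (∀ i j : Fin (n + 1), i ≤ j → horRel c (Q i) (Q j)) ∧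
      horRel c (Q (Fin.last n)) ((k : ℝ), 0)

/-- The service time of a request set: the least number of rotations realizable
by a tour. -/
noncomputable def serviceTime (c : ℝ) (R : Finset (ℝ × ℝ)) : ℕ :=
  sInf {k : ℕ | IsTour c R k}

/-- `M_{C,ver}(R̄)`: the length of the longest `≤_ver`-chain in `R̄ ⊆ C`. -/
noncomputable def maxChainC (c : ℝ) (R : Finset (ℝ × ℝ)) : ℕ :=
  sSup {n : ℕ | ∃ f : Fin n → ℝ × ℝ, (∀ i, f i ∈ R) ∧ Function.Injective f ∧
    ∀ i j : Fin n, i ≤ j → verRelC c (f i) (f j)}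

section
variable {c : ℝ} {R : Finset (ℝ × ℝ)}

lemma horRel_refl (c : ℝ) (P : ℝ × ℝ) : horRel c P P := by
  constructor <;> simp [horRel]

lemma horRel_trans {c : ℝ} {P Q S : ℝ × ℝ} (h1 : horRel c P Q) (h2 : horRel c Q S) :
    horRel c P S := by
  obtain ⟨h1a, h1b⟩ := h1
  obtain ⟨h2a, h2b⟩ := h2
  refine ⟨le_trans h1a h2a, ?_⟩
  have : |S.2 - P.2| ≤ |S.2 - Q.2| + |Q.2 - P.2| := by
    have := abs_sub_le S.2 Q.2 P.2
    linarith [abs_sub_le S.2 Q.2 P.2]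
  nlinarith [this]

lemma piC_shift {X Y : ℝ × ℝ} (h : piC X = piC Y) : ∃ z : ℤ, Y.1 = X.1 + z ∧ Y.2 = X.2 := by
  have h1 : (piC X).1 = (piC Y).1 := congrArg Prod.fst h
  have h2 : (piC X).2 = (piC Y).2 := congrArg Prod.snd h
  simp only [piC] at h1 h2
  refine ⟨⌊Y.1⌋ - ⌊X.1⌋, ?_, h2.symm⟩
  unfold Int.fract at h1
  push_cast
  linarith [h1]

lemma verRelC_refl (c : ℝ) (P : ℝ × ℝ) : verRelC c P P :=
  ⟨P, P, rfl, rfl, by simp [verRel]⟩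

lemma verRelC_r_mono {c : ℝ} (hc : 0 ≤ c) {P Q : ℝ × ℝ} (h : verRelC c P Q) : P.2 ≤ Q.2 := by
  obtain ⟨Q₁, Q₂, h1, h2, hv⟩ := h
  have e1 : (piC Q₁).2 = (piC P).2 := congrArg Prod.snd h1
  have e2 : (piC Q₂).2 = (piC Q).2 := congrArg Prod.snd h2
  simp only [piC] at e1 e2
  have := hv
  unfold verRel at this
  nlinarith [abs_nonneg (Q₂.1 - Q₁.1)]

lemma verRelC_trans {c : ℝ} (hc : 0 ≤ c) {P Q S : ℝ × ℝ} (h1 : verRelC c P Q) (h2 : verRelC c Q S) :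
    verRelC c P S := by
  obtain ⟨A, B, hA, hB, hv1⟩ := h1
  obtain ⟨B', C', hB', hC', hv2⟩ := h2
  obtain ⟨z, hz1, hz2⟩ := piC_shift (hB'.trans hB.symm)
  refine ⟨A, (C'.1 + z, C'.2), hA, ?_, ?_⟩
  · rw [← hC']
    unfold piC
    simp [Int.fract_add_intCast]
  · unfold verRel at *
    have habs : |C'.1 + z - A.1| ≤ |C'.1 + z - (B'.1 + z)| + |B'.1 + z - A.1| :=
      abs_sub_le _ _ _
    have e : B'.1 + (z:ℝ) = B.1 := hz1.symm
    simp only [add_sub_add_right_eq_sub] at habs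
    rw [e] at habs
    nlinarith [habs, hv1, hv2, hz2]

lemma verRelC_iff' {c : ℝ} {P Q : ℝ × ℝ} (hP : Int.fract P.1 = P.1)
    (hQ : Int.fract Q.1 = Q.1) :
    verRelC c P Q ↔ ∃ m : ℤ, c * |Q.1 + m - P.1| ≤ Q.2 - P.2 := by
  constructor
  · rintro ⟨A, B, hA, hB, hv⟩
    obtain ⟨z1, hz1, hz1'⟩ := piC_shift hA
    obtain ⟨z2, hz2, hz2'⟩ := piC_shift hB
    -- A = (P.1 + ?, P.2)?  careful: piC A = piC P gives P.1 = A.1 + z1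
    refine ⟨z1 - z2, ?_⟩
    unfold verRel at hv
    have e1 : P.1 = A.1 + z1 := hz1
    have e2 : Q.1 = B.1 + z2 := hz2
    have e : Q.1 + (↑(z1 - z2) : ℝ) - P.1 = B.1 - A.1 := by
      push_cast; linarith
    rw [e]
    linarith [hv, hz1', hz2']
  · rintro ⟨m, hm⟩
    refine ⟨P, (Q.1 + m, Q.2), rfl, ?_, ?_⟩
    · unfold piC; simp [Int.fract_add_intCast, hQ]
    · unfold verRel; simpa using hm

variable (hc : 0 < c)
  (hsub : ∀ P ∈ R, P.1 ∈ Set.Ico (0:ℝ) 1 ∧ P.2 ∈ Set.Icc (0:ℝ) 1)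
  (hgen : ∀ P ∈ R, ∀ Q ∈ R, ∀ m : ℤ, ((P.1 + (m:ℝ), P.2) ≠ Q) →
      c * |Q.1 - (P.1 + (m:ℝ))| ≠ |Q.2 - P.2|)

include hsub in
lemma fract_fix {P : ℝ × ℝ} (hP : P ∈ R) : Int.fract P.1 = P.1 :=
  Int.fract_eq_self.mpr ⟨(hsub P hP).1.1, (hsub P hP).1.2⟩

include hsub hgen in
lemma gen_ne {P Q : ℝ × ℝ} (hP : P ∈ R) (hQ : Q ∈ R) (hne : P ≠ Q) (m : ℤ) :
    c * |Q.1 + m - P.1| ≠ |Q.2 - P.2| := by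
  have hside : (P.1 + ((-m : ℤ):ℝ), P.2) ≠ Q := by
    intro h
    have h1 := congrArg Prod.fst h
    have h2 := congrArg Prod.snd h
    simp only at h1 h2
    have hp1 := (hsub P hP).1
    have hq1 := (hsub Q hQ).1
    have hmr : ((-m : ℤ):ℝ) = Q.1 - P.1 := by push_cast at h1 ⊢; linarith
    have h3 : |((-m : ℤ):ℝ)| < 1 := by
      rw [hmr, abs_lt]
      exact ⟨by linarith [hp1.2, hq1.1], by linarith [hp1.1, hq1.2]⟩
    have h4 : |(-m : ℤ)| < 1 := by
      have : ((|(-m : ℤ)| : ℤ) : ℝ) < 1 := by rw [Int.cast_abs]; exact h3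
      exact_mod_cast this
    have hm0 : (-m : ℤ) = 0 := Int.abs_lt_one_iff.mp h4
    apply hne
    rw [hm0] at h1
    exact Prod.ext (by push_cast at h1; linarith) h2
  have := hgen P hP Q hQ (-m) hside
  convert this using 2
  push_cast
  ring_nf

include hc hsub hgen in
lemma ver_strict {P Q : ℝ × ℝ} (hP : P ∈ R) (hQ : Q ∈ R) (hne : P ≠ Q)
    (hv : verRelC c P Q) : ∃ m : ℤ, c * |Q.1 + m - P.1| < Q.2 - P.2 := by
  obtain ⟨m, hm⟩ := (verRelC_iff' (fract_fix hsub hP) (fract_fix hsub hQ)).mp hv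
  refine ⟨m, lt_of_le_of_ne hm ?_⟩
  have h0 : 0 ≤ c * |Q.1 + m - P.1| := mul_nonneg hc.le (abs_nonneg _)
  intro heq
  have : |Q.2 - P.2| = Q.2 - P.2 := abs_of_nonneg (by linarith)
  exact gen_ne hsub hgen hP hQ hne m (by rw [this]; exact heq)

include hc hsub hgen in
lemma ver_lt_r {P Q : ℝ × ℝ} (hP : P ∈ R) (hQ : Q ∈ R) (hne : P ≠ Q)
    (hv : verRelC c P Q) : P.2 < Q.2 := by
  obtain ⟨m, hm⟩ := ver_strict hc hsub hgen hP hQ hne hv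
  nlinarith [abs_nonneg (Q.1 + (m:ℝ) - P.1), hc]

-- the set appearing in maxChainC
def MSet (c : ℝ) (R : Finset (ℝ × ℝ)) : Set ℕ :=
  {n : ℕ | ∃ f : Fin n → ℝ × ℝ, (∀ i, f i ∈ R) ∧ Function.Injective f ∧
    ∀ i j : Fin n, i ≤ j → verRelC c (f i) (f j)}

lemma maxChainC_eq : maxChainC c R = sSup (MSet c R) := rfl

lemma MSet_bdd : ∀ n ∈ MSet c R, n ≤ R.card := by
  rintro n ⟨f, hf, hinj, -⟩
  classical
  have := Finset.card_le_card_of_injOn (s := Finset.univ) (t := R) f (fun a _ => hf a)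
    (fun a _ b _ h => hinj h)
  simpa using this

lemma MSet_bddAbove : BddAbove (MSet c R) := ⟨R.card, fun n hn => MSet_bdd n hn⟩

lemma one_mem_MSet (h0 : ((0:ℝ), (0:ℝ)) ∈ R) : 1 ∈ MSet c R := by
  refine ⟨fun _ => ((0:ℝ), (0:ℝ)), fun _ => h0, fun a b _ => Subsingleton.elim a b,
    fun i j _ => verRelC_refl c _⟩

lemma maxChainC_mem (h0 : ((0:ℝ), (0:ℝ)) ∈ R) : maxChainC c R ∈ MSet c R := by
  rw [maxChainC_eq]
  exact Nat.sSup_mem ⟨1, one_mem_MSet h0⟩ MSet_bddAbove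

lemma one_le_maxChainC (h0 : ((0:ℝ), (0:ℝ)) ∈ R) : 1 ≤ maxChainC c R :=
  le_csSup MSet_bddAbove (one_mem_MSet h0)

-- ## weights and potential function for the upper bound

noncomputable def w0 (c : ℝ) (X : ℝ × ℝ) : ℕ := (⌈X.2 / c - X.1⌉).toNat

noncomputable def wt (c : ℝ) (X Y : ℝ × ℝ) : ℕ :=
  (⌈(Y.2 - X.2) / c - (Y.1 - X.1)⌉).toNat

def IsChainTo (c : ℝ) (R : Finset (ℝ × ℝ)) (P : ℝ × ℝ) (h : ℕ) (g : ℕ → ℝ × ℝ) : Prop :=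
  (∀ i ≤ h, g i ∈ R) ∧ g h = P ∧ ∀ i < h, g i ≠ g (i+1) ∧ verRelC c (g i) (g (i+1))

noncomputable def chainVal (c : ℝ) (h : ℕ) (g : ℕ → ℝ × ℝ) : ℕ :=
  w0 c (g 0) + ∑ i ∈ Finset.range h, wt c (g i) (g (i+1))

def nnSet (c : ℝ) (R : Finset (ℝ × ℝ)) (P : ℝ × ℝ) : Set ℕ :=
  {v | ∃ h g, IsChainTo c R P h g ∧ v = chainVal c h g}

noncomputable def nn (c : ℝ) (R : Finset (ℝ × ℝ)) (P : ℝ × ℝ) : ℕ := sSup (nnSet c R P)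

lemma le_toNat_ceil {x : ℝ} : x ≤ (⌈x⌉.toNat : ℝ) := by
  have h1 : ((⌈x⌉ : ℤ) : ℝ) ≤ ((⌈x⌉.toNat : ℕ) : ℝ) := by
    exact_mod_cast Int.self_le_toNat ⌈x⌉
  linarith [Int.le_ceil x]

lemma toNat_ceil_le {x : ℝ} (hx : -1 ≤ x) : ((⌈x⌉.toNat : ℕ) : ℝ) ≤ x + 1 := by
  rcases le_or_gt 0 ⌈x⌉ with h | h
  · have h1 : ((⌈x⌉.toNat : ℕ) : ℝ) = ((⌈x⌉ : ℤ) : ℝ) := by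
      exact_mod_cast congrArg (Int.cast : ℤ → ℝ) (Int.toNat_of_nonneg h)
    rw [h1]
    linarith [Int.ceil_lt_add_one x]
  · have h1 : (⌈x⌉.toNat : ℕ) = 0 := Int.toNat_of_nonpos h.le
    rw [h1]
    push_cast
    linarith

section chains
variable (hc : 0 < c)
  (hsub : ∀ P ∈ R, P.1 ∈ Set.Ico (0:ℝ) 1 ∧ P.2 ∈ Set.Icc (0:ℝ) 1)
  (hgen : ∀ P ∈ R, ∀ Q ∈ R, ∀ m : ℤ, ((P.1 + (m:ℝ), P.2) ≠ Q) →
      c * |Q.1 - (P.1 + (m:ℝ))| ≠ |Q.2 - P.2|)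

include hc in
lemma chain_pairwise {P : ℝ × ℝ} {h : ℕ} {g : ℕ → ℝ × ℝ} (hch : IsChainTo c R P h g) :
    ∀ i j, i ≤ j → j ≤ h → verRelC c (g i) (g j) := by
  intro i j hij hjh
  induction j, hij using Nat.le_induction with
  | base => exact verRelC_refl c _
  | succ j hij ih =>
    exact verRelC_trans hc.le (ih (by omega)) (hch.2.2 j (by omega)).2

include hc hsub hgen in
lemma chain_strict {P : ℝ × ℝ} {h : ℕ} {g : ℕ → ℝ × ℝ} (hch : IsChainTo c R P h g) :
    ∀ i j, i < j → j ≤ h → (g i).2 < (g j).2 := by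
  intro i j hij hjh
  induction j, hij using Nat.le_induction with
  | base =>
    exact ver_lt_r hc hsub hgen (hch.1 i (by omega)) (hch.1 (i+1) (by omega))
      (hch.2.2 i (by omega)).1 (hch.2.2 i (by omega)).2
  | succ j hij ih =>
    have h2 := ver_lt_r hc hsub hgen (hch.1 j (by omega)) (hch.1 (j+1) (by omega))
      (hch.2.2 j (by omega)).1 (hch.2.2 j (by omega)).2
    exact lt_trans (ih (by omega)) h2

include hc hsub hgen in
lemma chain_mem_MSet {P : ℝ × ℝ} {h : ℕ} {g : ℕ → ℝ × ℝ} (hch : IsChainTo c R P h g) :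
    h + 1 ∈ MSet c R := by
  refine ⟨fun i : Fin (h+1) => g i, fun i => hch.1 i (by omega), ?_, ?_⟩
  · intro a b hab
    by_contra hne
    rcases lt_or_gt_of_ne (fun e => hne (Fin.ext e) : (a:ℕ) ≠ (b:ℕ)) with hl | hl
    · exact absurd (congrArg Prod.snd hab)
        (ne_of_lt (chain_strict hc hsub hgen hch a b hl (by omega)))
    · exact absurd (congrArg Prod.snd hab).symm
        (ne_of_lt (chain_strict hc hsub hgen hch b a hl (by omega)))
  · intro i j hij
    exact chain_pairwise hc hch i j hij (by omega)

include hc hsub hgen in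
lemma chain_le_max {P : ℝ × ℝ} {h : ℕ} {g : ℕ → ℝ × ℝ} (hch : IsChainTo c R P h g) :
    h + 1 ≤ maxChainC c R :=
  le_csSup MSet_bddAbove (chain_mem_MSet hc hsub hgen hch)

lemma nnSet_nonempty {P : ℝ × ℝ} (hP : P ∈ R) : (nnSet c R P).Nonempty := by
  refine ⟨chainVal c 0 (fun _ => P), 0, fun _ => P, ⟨fun i _ => hP, rfl, ?_⟩, rfl⟩
  intro i hi
  omega

include hc hsub hgen in
lemma nnSet_bddAbove {P : ℝ × ℝ} : BddAbove (nnSet c R P) := by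
  classical
  set B : ℕ := (⌈1 / c + 1⌉).toNat with hB
  have key : ∀ x y : ℝ, x ≤ 1 / c + 1 → y ≤ x → (⌈y⌉).toNat ≤ B := by
    intro x y hx hyx
    rw [hB]
    exact Int.toNat_le_toNat (Int.ceil_le_ceil (le_trans hyx hx))
  refine ⟨B * R.card, ?_⟩
  rintro v ⟨h, g, hch, rfl⟩
  have hwt : ∀ i ∈ Finset.range h, wt c (g i) (g (i+1)) ≤ B := by
    intro i hi
    rw [Finset.mem_range] at hi
    have h1 := hsub _ (hch.1 i (by omega))
    have h2 := hsub _ (hch.1 (i+1) (by omega))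
    show (⌈((g (i+1)).2 - (g i).2) / c - ((g (i+1)).1 - (g i).1)⌉).toNat ≤ B
    refine key (1/c+1) _ le_rfl ?_
    have hd : ((g (i+1)).2 - (g i).2) / c ≤ 1 / c := by
      apply (div_le_div_iff_of_pos_right hc).mpr
      linarith [h1.2.2, h2.2.1, h1.2.1, h2.2.2]
    linarith [h1.1.2, h2.1.1, hd]
  have hw0 : w0 c (g 0) ≤ B := by
    have h1 := hsub _ (hch.1 0 (by omega))
    show (⌈(g 0).2 / c - (g 0).1⌉).toNat ≤ B
    refine key (1/c+1) _ le_rfl ?_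
    have hd : (g 0).2 / c ≤ 1 / c := by
      apply (div_le_div_iff_of_pos_right hc).mpr
      exact h1.2.2
    linarith [h1.1.1]
  calc chainVal c h g = w0 c (g 0) + ∑ i ∈ Finset.range h, wt c (g i) (g (i+1)) := rfl
    _ ≤ B + ∑ i ∈ Finset.range h, B :=
        add_le_add hw0 (Finset.sum_le_sum hwt)
    _ = B * (h + 1) := by simp [Finset.sum_const]; ring
    _ ≤ B * R.card := by
        have := MSet_bdd (h+1) (chain_mem_MSet hc hsub hgen hch)
        exact Nat.mul_le_mul_left B this

include hc hsub hgen in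
lemma nn_mem {P : ℝ × ℝ} (hP : P ∈ R) : nn c R P ∈ nnSet c R P :=
  Nat.sSup_mem (nnSet_nonempty hP) (nnSet_bddAbove hc hsub hgen)

include hc hsub hgen in
lemma le_nn {P : ℝ × ℝ} {v : ℕ} (hv : v ∈ nnSet c R P) : v ≤ nn c R P :=
  le_csSup (nnSet_bddAbove hc hsub hgen) hv

include hc hsub hgen in
lemma w0_le_nn {P : ℝ × ℝ} (hP : P ∈ R) : w0 c P ≤ nn c R P := by
  apply le_nn hc hsub hgen
  exact ⟨0, fun _ => P, ⟨fun i _ => hP, rfl, fun i hi => by omega⟩, by simp [chainVal]⟩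

include hc hsub hgen in
lemma nn_add_le {P Q : ℝ × ℝ} (hP : P ∈ R) (hQ : Q ∈ R) (hne : P ≠ Q)
    (hv : verRelC c P Q) : nn c R P + wt c P Q ≤ nn c R Q := by
  obtain ⟨h, g, hch, hval⟩ := nn_mem hc hsub hgen hP
  apply le_nn hc hsub hgen
  classical
  refine ⟨h + 1, fun i => if i ≤ h then g i else Q, ⟨?_, ?_, ?_⟩, ?_⟩
  · intro i hi
    by_cases hih : i ≤ h
    · simpa [hih] using hch.1 i hih
    · simpa [hih] using hQ
  · simp
  · intro i hi
    simp only
    by_cases hih : i + 1 ≤ h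
    · rw [if_pos (by omega : i ≤ h), if_pos hih]
      exact hch.2.2 i (by omega)
    · have hie : i = h := by omega
      subst hie
      rw [if_pos (le_refl i), if_neg hih, hch.2.1]
      exact ⟨hne, hv⟩
  · unfold chainVal
    beta_reduce
    rw [Finset.sum_range_succ]
    have esum : ∀ i ∈ Finset.range h,
        wt c (if i ≤ h then g i else Q) (if i + 1 ≤ h then g (i+1) else Q)
          = wt c (g i) (g (i+1)) := by
      intro i hi
      rw [Finset.mem_range] at hi
      rw [if_pos (by omega : i ≤ h), if_pos (by omega : i + 1 ≤ h)]
    rw [Finset.sum_congr rfl esum, if_pos (Nat.zero_le h), if_pos (le_refl h),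
      if_neg (by omega : ¬ h + 1 ≤ h), hch.2.1, hval]
    unfold chainVal
    ring

include hc hsub hgen in
lemma nn_bound {P : ℝ × ℝ} (hP : P ∈ R) :
    (nn c R P : ℝ) + P.1 ≤ P.2 / c + (maxChainC c R : ℝ) := by
  obtain ⟨h, g, hch, hval⟩ := nn_mem hc hsub hgen hP
  have hM : (h : ℝ) + 1 ≤ (maxChainC c R : ℝ) := by
    exact_mod_cast chain_le_max hc hsub hgen hch
  have cast_val : (nn c R P : ℝ)
      = ((w0 c (g 0) : ℕ) : ℝ) + ∑ i ∈ Finset.range h, ((wt c (g i) (g (i+1)) : ℕ) : ℝ) := by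
    rw [hval]
    unfold chainVal
    push_cast
    ring
  have hw0 : ((w0 c (g 0) : ℕ) : ℝ) ≤ (g 0).2 / c - (g 0).1 + 1 := by
    have h1 := hsub _ (hch.1 0 (by omega))
    apply toNat_ceil_le
    have : 0 ≤ (g 0).2 / c := div_nonneg h1.2.1 hc.le
    linarith [h1.1.2]
  have hwt : ∀ i ∈ Finset.range h, ((wt c (g i) (g (i+1)) : ℕ) : ℝ)
      ≤ (((g (i+1)).2 - (g i).2) / c - ((g (i+1)).1 - (g i).1)) + 1 := by
    intro i hi
    rw [Finset.mem_range] at hi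
    have h1 := hsub _ (hch.1 i (by omega))
    have h2 := hsub _ (hch.1 (i+1) (by omega))
    apply toNat_ceil_le
    have hr : 0 ≤ ((g (i+1)).2 - (g i).2) / c :=
      div_nonneg (by linarith [verRelC_r_mono hc.le (hch.2.2 i (by omega)).2]) hc.le
    linarith [h2.1.2, h1.1.1]
  have hsum : ∑ i ∈ Finset.range h, ((wt c (g i) (g (i+1)) : ℕ) : ℝ)
      ≤ ((g h).2 - (g 0).2) / c - ((g h).1 - (g 0).1) + h := by
    set F : ℕ → ℝ := fun i => (g i).2 / c - (g i).1 + i with hF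
    calc ∑ i ∈ Finset.range h, ((wt c (g i) (g (i+1)) : ℕ) : ℝ)
        ≤ ∑ i ∈ Finset.range h, (F (i+1) - F i) := by
          apply Finset.sum_le_sum
          intro i hi
          refine (hwt i hi).trans (le_of_eq ?_)
          simp only [hF]
          push_cast
          ring
      _ = F h - F 0 := Finset.sum_range_sub F h
      _ = ((g h).2 - (g 0).2) / c - ((g h).1 - (g 0).1) + h := by
          simp only [hF]
          push_cast
          ring
  rw [cast_val]
  rw [hch.2.1] at hsum
  have := hch.2.1
  calc ((w0 c (g 0) : ℕ) : ℝ) + ∑ i ∈ Finset.range h, ((wt c (g i) (g (i+1)) : ℕ) : ℝ) + P.1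
      ≤ ((g 0).2 / c - (g 0).1 + 1) + ((P.2 - (g 0).2) / c - (P.1 - (g 0).1) + h) + P.1 := by
        linarith [hw0, hsum]
    _ = P.2 / c + ((h:ℝ) + 1) := by ring
    _ ≤ P.2 / c + (maxChainC c R : ℝ) := by linarith [hM]

noncomputable def liftP (c : ℝ) (R : Finset (ℝ × ℝ)) (P : ℝ × ℝ) : ℝ × ℝ :=
  ((nn c R P : ℝ) + P.1, P.2)

include hsub in
lemma piC_liftP {P : ℝ × ℝ} (hP : P ∈ R) : piC (liftP c R P) = P := by
  unfold piC liftP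
  have : ((nn c R P : ℕ) : ℝ) = (((nn c R P : ℕ) : ℤ) : ℝ) := by push_cast; ring
  rw [this]
  simp only [Int.fract_intCast_add]
  rw [fract_fix hsub hP]

include hc hsub hgen in
lemma wt_cast_le {P Q : ℝ × ℝ} :
    (Q.2 - P.2) / c - (Q.1 - P.1) ≤ (wt c P Q : ℝ) := le_toNat_ceil

include hc hsub hgen in
lemma key_hor {P Q : ℝ × ℝ} (hP : P ∈ R) (hQ : Q ∈ R) (hne : P ≠ Q)
    (hlt : (nn c R P : ℝ) + P.1 < (nn c R Q : ℝ) + Q.1) :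
    horRel c (liftP c R P) (liftP c R Q) := by
  have habs : ∀ X Y : ℝ × ℝ, X ∈ R → Y ∈ R → ¬ verRelC c X Y →
      ∀ m : ℤ, Y.2 - X.2 < c * |Y.1 + m - X.1| := by
    intro X Y hX hY hv m
    by_contra hle
    exact hv ((verRelC_iff' (fract_fix hsub hX) (fract_fix hsub hY)).mpr ⟨m, by linarith⟩)
  constructor
  · exact hlt.le
  · show |Q.2 - P.2| ≤ c * ((nn c R Q : ℝ) + Q.1 - ((nn c R P : ℝ) + P.1))
    by_cases hQP : verRelC c Q P
    · exfalso
      have h1 : nn c R Q + wt c Q P ≤ nn c R P := nn_add_le hc hsub hgen hQ hP (Ne.symm hne) hQP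
      have h2 : (P.2 - Q.2) / c - (P.1 - Q.1) ≤ (wt c Q P : ℝ) := le_toNat_ceil
      have h3 : Q.2 < P.2 := ver_lt_r hc hsub hgen hQ hP (Ne.symm hne) hQP
      have h4 : (0:ℝ) < (P.2 - Q.2) / c := div_pos (by linarith) hc
      have h5 : ((nn c R Q : ℕ):ℝ) + (wt c Q P : ℕ) ≤ ((nn c R P : ℕ) : ℝ) := by
        exact_mod_cast h1
      linarith
    by_cases hPQ : verRelC c P Q
    · have h1 : nn c R P + wt c P Q ≤ nn c R Q := nn_add_le hc hsub hgen hP hQ hne hPQ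
      have h2 : (Q.2 - P.2) / c - (Q.1 - P.1) ≤ (wt c P Q : ℝ) := le_toNat_ceil
      have h3 : P.2 < Q.2 := ver_lt_r hc hsub hgen hP hQ hne hPQ
      have h5 : ((nn c R P : ℕ):ℝ) + (wt c P Q : ℕ) ≤ ((nn c R Q : ℕ) : ℝ) := by
        exact_mod_cast h1
      rw [abs_of_nonneg (by linarith : (0:ℝ) ≤ Q.2 - P.2)]
      have h6 : (Q.2 - P.2) / c ≤ (nn c R Q : ℝ) + Q.1 - ((nn c R P : ℝ) + P.1) := by
        linarith
      calc Q.2 - P.2 = c * ((Q.2 - P.2)/c) := by field_simp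
        _ ≤ c * ((nn c R Q : ℝ) + Q.1 - ((nn c R P : ℝ) + P.1)) := by
            exact mul_le_mul_of_nonneg_left h6 hc.le
    · set m : ℤ := (nn c R Q : ℤ) - (nn c R P : ℤ) with hm
      have hdiff : (nn c R Q : ℝ) + Q.1 - ((nn c R P : ℝ) + P.1) = Q.1 + m - P.1 := by
        rw [hm]; push_cast; ring
      have e1 := habs P Q hP hQ hPQ m
      have e2 := habs Q P hQ hP hQP (-m)
      have eabs : |P.1 + (-m : ℤ) - Q.1| = |Q.1 + m - P.1| := by
        rw [← abs_neg]
        congr 1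
        push_cast
        ring
      rw [eabs] at e2
      have habs2 : |Q.1 + (m:ℝ) - P.1| = Q.1 + (m:ℝ) - P.1 := by
        rw [abs_of_pos]
        rw [← hdiff]
        linarith
      rw [hdiff]
      rw [habs2] at e1 e2
      rcases abs_cases (Q.2 - P.2) with ⟨he, -⟩ | ⟨he, -⟩ <;> rw [he] <;> linarith

include hc hsub hgen in
lemma key_injOn : Set.InjOn (fun P => (nn c R P : ℝ) + P.1) R := by
  intro P hP Q hQ hkey
  simp only at hkey
  by_contra hne
  have hp1 := (hsub P hP).1
  have hq1 := (hsub Q hQ).1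
  have hb1 : ((nn c R Q : ℕ) : ℝ) < ((nn c R P : ℕ) : ℝ) + 1 := by
    linarith [hp1.2, hq1.1]
  have hb2 : ((nn c R P : ℕ) : ℝ) < ((nn c R Q : ℕ) : ℝ) + 1 := by
    linarith [hq1.2, hp1.1]
  have hb1' : (nn c R Q : ℕ) < (nn c R P : ℕ) + 1 := by exact_mod_cast hb1
  have hb2' : (nn c R P : ℕ) < (nn c R Q : ℕ) + 1 := by exact_mod_cast hb2
  have hnn : nn c R P = nn c R Q := by omega
  have ht : P.1 = Q.1 := by
    have : ((nn c R P : ℕ) : ℝ) = ((nn c R Q : ℕ) : ℝ) := by exact_mod_cast hnn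
    linarith
  -- equal t, distinct points: r differ, so ver comparable with positive weight
  have main : ∀ X Y : ℝ × ℝ, X ∈ R → Y ∈ R → X ≠ Y → X.1 = Y.1 → X.2 < Y.2 →
      nn c R X = nn c R Y → False := by
    intro X Y hX hY hXY ht1 hr hXYnn
    have hv : verRelC c X Y := by
      rw [verRelC_iff' (fract_fix hsub hX) (fract_fix hsub hY)]
      exact ⟨0, by rw [ht1]; simpa using by linarith⟩
    have h4 : nn c R X + wt c X Y ≤ nn c R Y := nn_add_le hc hsub hgen hX hY hXY hv
    have h5 : 1 ≤ wt c X Y := by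
      unfold wt
      have : (0:ℝ) < (Y.2 - X.2)/c - (Y.1 - X.1) := by
        rw [ht1]
        simpa using div_pos (by linarith) hc
      have := Int.ceil_pos.mpr this
      omega
    omega
  rcases lt_trichotomy P.2 Q.2 with hr | hr | hr
  · exact main P Q hP hQ hne ht hr hnn
  · exact hne (Prod.ext ht hr)
  · exact main Q P hQ hP (Ne.symm hne) ht.symm hr hnn.symm

include hc hsub hgen in
lemma nn_origin (h0 : ((0:ℝ), (0:ℝ)) ∈ R) : nn c R ((0:ℝ), (0:ℝ)) = 0 := by
  have : ∀ v ∈ nnSet c R ((0:ℝ), (0:ℝ)), v ≤ 0 := by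
    rintro v ⟨h, g, hch, rfl⟩
    have hh : h = 0 := by
      by_contra hh
      have hlast := chain_strict hc hsub hgen hch (h-1) h (by omega) le_rfl
      rw [hch.2.1] at hlast
      have := (hsub _ (hch.1 (h-1) (by omega))).2.1
      simp only at hlast
      linarith
    subst hh
    have hg0 : g 0 = ((0:ℝ), (0:ℝ)) := hch.2.1
    unfold chainVal w0
    rw [hg0]
    simp
  exact Nat.le_zero.mp (csSup_le (nnSet_nonempty h0) this)

include hc hsub hgen in
lemma exists_good_tour (h0 : ((0:ℝ), (0:ℝ)) ∈ R) :
    ∃ k : ℕ, IsTour c R k ∧ (k : ℝ) ≤ (maxChainC c R : ℝ) + 1 + 2 / c := by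
  classical
  set M := maxChainC c R with hM
  set keyf : ℝ × ℝ → ℝ := fun P => (nn c R P : ℝ) + P.1 with hkeyf
  have hinj : Set.InjOn keyf R := key_injOn hc hsub hgen
  set S : Finset ℝ := R.image keyf with hS
  have hcard : S.card = R.card := Finset.card_image_of_injOn hinj
  have hRpos : 0 < R.card := Finset.card_pos.mpr ⟨_, h0⟩
  set n : ℕ := R.card - 1 with hn
  have hn1 : n + 1 = R.card := by omega
  have hcard' : S.card = n + 1 := by omega
  set iso := S.orderIsoOfFin hcard' with hiso
  have huniq : ∀ i : Fin (n+1), ∃! a, a ∈ R ∧ keyf a = ((iso i : ℝ)) := by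
    intro i
    have hmem : ((iso i : ℝ)) ∈ S := (iso i).2
    obtain ⟨a, ha, hk⟩ :=
      Finset.mem_image.mp (show ((iso i : ℝ)) ∈ Finset.image keyf R from hmem)
    exact ⟨a, ⟨ha, hk⟩, fun b hb => hinj hb.1 ha (hb.2.trans hk.symm)⟩
  set E : Fin (n+1) → ℝ × ℝ :=
    fun i => R.choose (fun a => keyf a = ((iso i : ℝ))) (huniq i) with hE
  have hEmem : ∀ i, E i ∈ R := fun i => Finset.choose_mem _ _ _
  have hEkey : ∀ i, keyf (E i) = (iso i : ℝ) :=
    fun i => Finset.choose_property (fun a => keyf a = ((iso i : ℝ))) R (huniq i)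
  have hEmono : ∀ i j : Fin (n+1), i < j → keyf (E i) < keyf (E j) := by
    intro i j hij
    rw [hEkey i, hEkey j]
    exact_mod_cast iso.strictMono hij
  have hEinj : Function.Injective E := by
    intro i j hij
    by_contra hne
    rcases lt_or_gt_of_ne hne with hl | hl
    · exact absurd (congrArg keyf hij) (ne_of_lt (hEmono i j hl))
    · exact absurd (congrArg keyf hij).symm (ne_of_lt (hEmono j i hl))
  have hkey0 : keyf ((0:ℝ), (0:ℝ)) = 0 := by
    show (nn c R ((0:ℝ),(0:ℝ)) : ℝ) + ((0:ℝ),(0:ℝ)).1 = 0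
    rw [nn_origin hc hsub hgen h0]
    norm_num
  have hkey_nonneg : ∀ P ∈ R, 0 ≤ keyf P := by
    intro P hP
    rw [hkeyf]
    simp only
    have := (hsub P hP).1.1
    positivity
  have hE0 : E 0 = ((0:ℝ), (0:ℝ)) := by
    apply hinj (hEmem 0) h0
    have h1 : keyf (E 0) ≤ keyf ((0:ℝ), (0:ℝ)) := by
      obtain ⟨j, hj⟩ : ∃ j : Fin (n+1), E j = ((0:ℝ),(0:ℝ)) := by
        have hmem : keyf ((0:ℝ),(0:ℝ)) ∈ S := Finset.mem_image_of_mem keyf h0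
        refine ⟨iso.symm ⟨_, hmem⟩, ?_⟩
        apply hinj (hEmem _) h0
        rw [hEkey]
        simp
      rw [← hj]
      rcases eq_or_lt_of_le (Fin.zero_le j) with hz | hz
      · rw [← hz]
      · exact (hEmono 0 j hz).le
    have h2 := hkey_nonneg (E 0) (hEmem 0)
    rw [hkey0]
    rw [hkey0] at h1
    exact le_antisymm h1 h2
  -- the tour
  set k : ℕ := M + ⌈2 / c⌉₊ with hk
  refine ⟨k, ⟨n, hn1, fun i => liftP c R (E i), ?_, ?_, ?_, ?_, ?_⟩, ?_⟩
  · show liftP c R (E 0) = ((0:ℝ), (0:ℝ))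
    rw [hE0]
    unfold liftP
    rw [nn_origin hc hsub hgen h0]
    norm_num
  · intro i
    rw [piC_liftP hsub (hEmem i)]
    exact hEmem i
  · intro i j hij
    simp only [piC_liftP hsub (hEmem i), piC_liftP hsub (hEmem j)] at hij
    exact hEinj hij
  · intro i j hij
    rcases eq_or_lt_of_le hij with he | hl
    · rw [he]
      exact horRel_refl c _
    · refine key_hor hc hsub hgen (hEmem i) (hEmem j) ?_ (hEmono i j hl)
      intro he
      exact absurd (congrArg keyf he) (ne_of_lt (hEmono i j hl))
  · set P := E (Fin.last n) with hP
    have hPmem : P ∈ R := hEmem _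
    have hbound : keyf P + P.2 / c ≤ (M : ℝ) + 2 / c := by
      have h1 := nn_bound hc hsub hgen hPmem
      have h2 := (hsub P hPmem).2
      have h3 : P.2 / c ≤ 1 / c := by
        exact (div_le_div_iff_of_pos_right hc).mpr h2.2
      rw [hkeyf]
      simp only
      have : (1:ℝ)/c + 1/c = 2/c := by ring
      linarith
    have hkc : (M : ℝ) + 2 / c ≤ (k : ℝ) := by
      rw [hk]
      push_cast
      linarith [Nat.le_ceil (2 / c)]
    constructor
    · show ((liftP c R P).1 : ℝ) ≤ (k:ℝ)
      unfold liftP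
      simp only
      have hr : 0 ≤ P.2 / c := div_nonneg (hsub P hPmem).2.1 hc.le
      have : keyf P = (nn c R P : ℝ) + P.1 := rfl
      linarith
    · show |(0:ℝ) - (liftP c R P).2| ≤ c * ((k:ℝ) - (liftP c R P).1)
      unfold liftP
      simp only
      rw [abs_of_nonpos (by linarith [(hsub P hPmem).2.1] : (0:ℝ) - P.2 ≤ 0)]
      have hdiff : P.2 / c ≤ (k:ℝ) - ((nn c R P : ℝ) + P.1) := by
        have : keyf P = (nn c R P : ℝ) + P.1 := rfl
        linarith
      calc -((0:ℝ) - P.2) = P.2 := by ring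
        _ = c * (P.2 / c) := by field_simp
        _ ≤ c * ((k:ℝ) - ((nn c R P : ℝ) + P.1)) := mul_le_mul_of_nonneg_left hdiff hc.le
  · rw [hk]
    push_cast
    have := Nat.ceil_lt_add_one (by positivity : (0:ℝ) ≤ 2 / c)
    linarith

include hc hsub hgen in
lemma max_le_tour (h0 : ((0:ℝ), (0:ℝ)) ∈ R) {k : ℕ} (ht : IsTour c R k) :
    maxChainC c R ≤ k + 1 := by
  classical
  obtain ⟨n, hn, Q, hQ0, hQmem, hQinj, hQhor, hQend⟩ := ht
  set M := maxChainC c R with hMdef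
  obtain ⟨F, hFmem, hFinj, hFpair⟩ := maxChainC_mem (c := c) h0
  have hM0 : 0 < M := one_le_maxChainC h0
  set F' : ℕ → ℝ × ℝ := fun l => F ⟨l % M, Nat.mod_lt _ hM0⟩ with hF'
  have hF'eq : ∀ l (hl : l < M), F' l = F ⟨l, hl⟩ := by
    intro l hl
    simp only [hF']
    congr 1
    exact Fin.ext (Nat.mod_eq_of_lt hl)
  have hF'mem : ∀ l, F' l ∈ R := fun l => hFmem _
  have hF'ne : ∀ i j, i < j → j < M → F' i ≠ F' j := by
    intro i j hij hjM he
    have h2 : (⟨i % M, Nat.mod_lt _ hM0⟩ : Fin M) = ⟨j % M, Nat.mod_lt _ hM0⟩ := hFinj he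
    have h3 : i % M = j % M := congrArg Fin.val h2
    rw [Nat.mod_eq_of_lt (by omega), Nat.mod_eq_of_lt hjM] at h3
    omega
  have hF'pair : ∀ i j, i ≤ j → j < M → verRelC c (F' i) (F' j) := by
    intro i j hij hjM
    exact hFpair ⟨i % M, Nat.mod_lt _ hM0⟩ ⟨j % M, Nat.mod_lt _ hM0⟩
      (by rw [Fin.mk_le_mk, Nat.mod_eq_of_lt (by omega), Nat.mod_eq_of_lt hjM]; exact hij)
  -- the d-sequence of strict vertical displacements
  have hdex : ∀ l : ℕ, ∃ x : ℝ, l + 1 < M →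
      ((∃ m : ℤ, x = (F' (l+1)).1 - (F' l).1 + m) ∧ c * |x| < (F' (l+1)).2 - (F' l).2) := by
    intro l
    by_cases hl : l + 1 < M
    · obtain ⟨m, hm⟩ := ver_strict hc hsub hgen (hF'mem l) (hF'mem (l+1))
        (hF'ne l (l+1) (by omega) hl) (hF'pair l (l+1) (by omega) hl)
      exact ⟨(F' (l+1)).1 + m - (F' l).1, fun _ => ⟨⟨m, by ring⟩, hm⟩⟩
    · exact ⟨0, fun h => absurd h hl⟩
  set d : ℕ → ℝ := fun l => Classical.choose (hdex l) with hd
  have hdspec : ∀ l, l + 1 < M →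
      ((∃ m : ℤ, d l = (F' (l+1)).1 - (F' l).1 + m) ∧ c * |d l| < (F' (l+1)).2 - (F' l).2) :=
    fun l => Classical.choose_spec (hdex l)
  set T : ℕ → ℝ := fun i => (F' 0).1 + ∑ l ∈ Finset.range i, d l with hT
  have hTsucc : ∀ i, T (i+1) = T i + d i := by
    intro i
    simp only [hT, Finset.sum_range_succ]
    ring
  -- T i is a lift of (F' i).1
  have L1 : ∀ i, i < M → ∃ z : ℤ, T i = (F' i).1 + z := by
    intro i
    induction i with
    | zero => exact fun _ => ⟨0, by simp [hT]⟩
    | succ i ih =>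
      intro h
      obtain ⟨z, hz⟩ := ih (by omega)
      obtain ⟨⟨m, hm⟩, -⟩ := hdspec i h
      exact ⟨z + m, by rw [hTsucc, hz, hm]; push_cast; ring⟩
  have L2 : ∀ i j, i < j → j < M → c * |T j - T i| < (F' j).2 - (F' i).2 := by
    intro i j hij hjM
    induction j, hij using Nat.le_induction with
    | base =>
      have := (hdspec i (by omega)).2
      rw [hTsucc]
      simpa using this
    | succ j hij ih =>
      have h1 := ih (by omega)
      have h2 := (hdspec j (by omega)).2
      rw [hTsucc]
      have h3 : |T j + d j - T i| ≤ |T j - T i| + |d j| := by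
        have := abs_add_le (T j - T i) (d j)
        rw [show T j + d j - T i = T j - T i + d j by ring]
        exact this
      nlinarith [h3, hc]
  have L2' : ∀ i, i < M → c * |T i - T 0| ≤ (F' i).2 - (F' 0).2 := by
    intro i hiM
    rcases Nat.eq_zero_or_pos i with h | h
    · subst h; simp
    · exact (L2 0 i h hiM).le
  -- positions of the chain elements on the tour
  have himg : ∀ P ∈ R, ∃ j, piC (Q j) = P := by
    intro P hP
    have hsub2 : Finset.univ.image (fun j => piC (Q j)) ⊆ R := by
      intro x hx
      obtain ⟨j, -, hj⟩ := Finset.mem_image.mp hx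
      exact hj ▸ hQmem j
    have hcard2 : (Finset.univ.image (fun j => piC (Q j))).card = R.card := by
      rw [Finset.card_image_of_injective _ hQinj, Finset.card_univ, Fintype.card_fin, hn]
    have heq : Finset.univ.image (fun j => piC (Q j)) = R :=
      Finset.eq_of_subset_of_card_le hsub2 (le_of_eq hcard2.symm)
    rw [← heq] at hP
    obtain ⟨j, -, hj⟩ := Finset.mem_image.mp hP
    exact ⟨j, hj⟩
  set σ : ℕ → Fin (n+1) := fun l => Classical.choose (himg (F' l) (hF'mem l)) with hσd
  have hσ : ∀ l, piC (Q (σ l)) = F' l := fun l => Classical.choose_spec (himg (F' l) (hF'mem l))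
  set a : ℕ → ℝ := fun l => (Q (σ l)).1 with ha
  have har : ∀ l, (Q (σ l)).2 = (F' l).2 := by
    intro l
    have := congrArg Prod.snd (hσ l)
    simpa [piC] using this
  have hafract : ∀ l, Int.fract (a l) = (F' l).1 := by
    intro l
    have := congrArg Prod.fst (hσ l)
    simpa [piC, ha] using this
  have haint : ∀ l, ∃ z : ℤ, a l = (F' l).1 + z := by
    intro l
    refine ⟨⌊a l⌋, ?_⟩
    rw [← hafract l]
    rw [Int.fract]
    ring
  have L3 : ∀ i j, i < M → j < M → i ≠ j → |(F' j).2 - (F' i).2| ≤ c * |a j - a i| := by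
    intro i j hiM hjM hij
    have hne : σ i ≠ σ j := by
      intro he
      apply hij
      have : F' i = F' j := by rw [← hσ i, ← hσ j, he]
      by_contra hne2
      rcases Nat.lt_or_ge i j with h | h
      · exact hF'ne i j h hjM this
      · exact hF'ne j i (by omega) hiM this.symm
    rcases le_total (σ i) (σ j) with h | h
    · have := (hQhor _ _ h).2
      rw [har i, har j] at this
      calc |(F' j).2 - (F' i).2| ≤ c * ((Q (σ j)).1 - (Q (σ i)).1) := this
        _ ≤ c * |a j - a i| := by
            apply mul_le_mul_of_nonneg_left _ hc.le
            exact le_abs_self _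
    · have := (hQhor _ _ h).2
      rw [har i, har j] at this
      calc |(F' j).2 - (F' i).2| = |(F' i).2 - (F' j).2| := abs_sub_comm _ _
        _ ≤ c * ((Q (σ i)).1 - (Q (σ j)).1) := this
        _ ≤ c * |a j - a i| := by
            apply mul_le_mul_of_nonneg_left _ hc.le
            rw [abs_sub_comm]
            exact le_abs_self _
  have L4 : ∀ i, i < M → (F' i).2 ≤ c * a i ∧ (F' i).2 ≤ c * (k - a i) := by
    intro i hiM
    have hr0 : 0 ≤ (F' i).2 := (hsub _ (hF'mem i)).2.1
    constructor
    · have := (hQhor 0 (σ i) (Fin.zero_le _)).2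
      rw [hQ0, har i] at this
      simpa [abs_of_nonneg hr0] using this
    · have h1 := hQhor (σ i) (Fin.last n) (Fin.le_last _)
      have h2 := horRel_trans h1 hQend
      have := h2.2
      rw [har i] at this
      simp only at this
      rw [abs_of_nonpos (by linarith : (0:ℝ) - (F' i).2 ≤ 0)] at this
      linarith [this]
  -- the integer rotation labels
  have L6 : ∀ i, i < M → ∃ w : ℤ, (w : ℝ) = a i - T i := by
    intro i hiM
    obtain ⟨z1, hz1⟩ := haint i
    obtain ⟨z2, hz2⟩ := L1 i hiM
    exact ⟨z1 - z2, by rw [hz1, hz2]; push_cast; ring⟩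
  have L7 : ∀ i, i < M → ((⌊a i - T i⌋ : ℤ) : ℝ) = a i - T i := by
    intro i hiM
    obtain ⟨w, hw⟩ := L6 i hiM
    rw [← hw, Int.floor_intCast]
  set φ : Fin M → ℤ := fun i => ⌊a i - T i⌋ with hφ
  have hφinj : Set.InjOn φ ↑(Finset.univ : Finset (Fin M)) := by
    have main : ∀ i j : Fin M, i < j → φ i ≠ φ j := by
      intro i j hij he
      have he' : ⌊a (i:ℕ) - T (i:ℕ)⌋ = ⌊a (j:ℕ) - T (j:ℕ)⌋ := he
      have hcast : a (i:ℕ) - T (i:ℕ) = a (j:ℕ) - T (j:ℕ) := by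
        rw [← L7 i i.isLt, ← L7 j j.isLt, he']
      have hdiff : a (j:ℕ) - a (i:ℕ) = T (j:ℕ) - T (i:ℕ) := by linarith
      have h2 := L2 i j hij j.isLt
      have h3 := L3 i j i.isLt j.isLt (by omega)
      have h4 : (0:ℝ) < (F' (j:ℕ)).2 - (F' (i:ℕ)).2 := by
        nlinarith [abs_nonneg (T (j:ℕ) - T (i:ℕ)), hc]
      rw [abs_of_pos h4] at h3
      rw [hdiff] at h3
      linarith
    intro i _ j _ he
    by_contra hne
    rcases lt_or_gt_of_ne (fun e => hne e : i ≠ j) with h | h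
    · exact main i j h he
    · exact main j i h he.symm
  have Lbound : ∀ l, l < M → (-1 : ℝ) < a l - T l ∧ a l - T l ≤ (k:ℝ) := by
    intro l hlM
    have hT0 : T 0 = (F' 0).1 := by simp [hT]
    have ht0 := (hsub _ (hF'mem 0)).1
    obtain ⟨ht01, ht02⟩ := ht0
    have hr0 := (hsub _ (hF'mem 0)).2.1
    have h2 := L2' l hlM
    have h4 := L4 l hlM
    have habs : |T l - T 0| * c ≤ (F' l).2 - (F' 0).2 := by
      calc |T l - T 0| * c = c * |T l - T 0| := by ring
        _ ≤ _ := h2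
    have habs1 : (T l - T 0) * c ≤ (F' l).2 - (F' 0).2 :=
      le_trans (mul_le_mul_of_nonneg_right (le_abs_self _) hc.le) habs
    have habs2 : -((F' l).2 - (F' 0).2) ≤ (T l - T 0) * c := by
      have := le_trans (mul_le_mul_of_nonneg_right (neg_abs_le _) hc.le) habs1
      nlinarith [abs_nonneg (T l - T 0), neg_abs_le (T l - T 0), habs, hc]
    constructor
    · -- a l - T l > -1 ;  multiply by c
      have hmul : (a l - T l) * c > -c := by
        have e1 : (F' l).2 ≤ c * a l := h4.1
        rw [hT0] at habs1
        nlinarith [habs1, hr0, ht02, hc]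
      nlinarith [hmul, hc]
    · have hmul : (a l - T l) * c ≤ (k:ℝ) * c := by
        have e1 : (F' l).2 ≤ c * ((k:ℝ) - a l) := h4.2
        rw [hT0] at habs2
        nlinarith [habs2, hr0, ht01, hc]
      nlinarith [hmul, hc]
  have hφmem : ∀ i : Fin M, φ i ∈ Finset.Icc (0:ℤ) (k:ℤ) := by
    intro i
    have hb := Lbound (i:ℕ) i.isLt
    have hcast := L7 (i:ℕ) i.isLt
    have hphival : ((φ i : ℤ) : ℝ) = a (i:ℕ) - T (i:ℕ) := hcast
    rw [Finset.mem_Icc]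
    constructor
    · have h1 : (-1 : ℝ) < ((φ i : ℤ) : ℝ) := by rw [hphival]; exact hb.1
      have h2 : (-1 : ℤ) < φ i := by exact_mod_cast h1
      omega
    · have h1 : ((φ i : ℤ) : ℝ) ≤ ((k : ℤ) : ℝ) := by
        rw [hphival]
        exact_mod_cast hb.2
      exact_mod_cast h1
  have hcard3 : M ≤ (Finset.Icc (0:ℤ) (k:ℤ)).card := by
    have := Finset.card_le_card_of_injOn (s := (Finset.univ : Finset (Fin M)))
      (t := Finset.Icc (0:ℤ) (k:ℤ)) φ (fun i _ => hφmem i) (fun i hi j hj he => hφinj hi hj he)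
    simpa using this
  have hcard4 : (Finset.Icc (0:ℤ) (k:ℤ)).card = k + 1 := by
    rw [Int.card_Icc]
    simp
  omega

end chains
end

/-- `M_{C,ver}(R̄) − 1 − 1/c ≤ ST(R̄) ≤ M_{C,ver}(R̄) + 1 + 2/c`. -/
theorem service_time_bounds (c : ℝ) (hc : 0 < c) (R : Finset (ℝ × ℝ))
    (hsub : ∀ P ∈ R, P.1 ∈ Set.Ico (0:ℝ) 1 ∧ P.2 ∈ Set.Icc (0:ℝ) 1)
    (h0 : ((0:ℝ), (0:ℝ)) ∈ R)
    (hgen : ∀ P ∈ R, ∀ Q ∈ R, ∀ m : ℤ, ((P.1 + (m:ℝ), P.2) ≠ Q) →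
      c * |Q.1 - (P.1 + (m:ℝ))| ≠ |Q.2 - P.2|) :
    (maxChainC c R : ℝ) - 1 - 1 / c ≤ (serviceTime c R : ℝ) ∧
    (serviceTime c R : ℝ) ≤ (maxChainC c R : ℝ) + 1 + 2 / c := by
  obtain ⟨k, htourk, hkle⟩ := exists_good_tour hc hsub hgen h0
  have hne : {k' : ℕ | IsTour c R k'}.Nonempty := ⟨k, htourk⟩
  have hst_mem : IsTour c R (serviceTime c R) := Nat.sInf_mem hne
  have hst_le : serviceTime c R ≤ k := Nat.sInf_le htourk
  constructor
  · have h1 : maxChainC c R ≤ serviceTime c R + 1 := max_le_tour hc hsub hgen h0 hst_mem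
    have h2 : (maxChainC c R : ℝ) ≤ (serviceTime c R : ℝ) + 1 := by exact_mod_cast h1
    have h3 : 0 < 1 / c := by positivity
    linarith
  · have h2 : ((serviceTime c R : ℕ) : ℝ) ≤ (k:ℝ) := by exact_mod_cast hst_le
    linarith
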